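/- Let τ, α, μ > 0, set β = α/τ and θ = μ²/τ, and let e, q, f : ℝ × ℝ → ℂ be twice continuously differentiable functions satisfying ∂ₜe + ∂ₓq = f and τ·∂ₜq + q − μ²·∂ₓ²q + α·∂ₓe = 0 on ℝ². Let k, ω, ω′ ∈ ℂ satisfy ω + ω′ = (1 + μ²k²)/τ and ω·ω′ = (α/τ)·k². Then at every (x, t) ∈ ℝ² the scalar local relation holds: ∂ₜ[ e^{−ikx + ωt}·(−ω′·e + ik·q) ] = ∂ₓ[ e^{−ikx + ωt}·(−ikβ·e + (ω′ − θk²)·q + ikθ·∂ₓq) ] − ω′·e^{−ikx + ωt}·f. -/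

import Mathlib

open Complex

/-- Partial derivative in the spatial variable `x` (first coordinate). -/
noncomputable def px (u : ℝ × ℝ → ℂ) : ℝ × ℝ → ℂ :=
  fun p => deriv (fun x => u (x, p.2)) p.1

/-- Partial derivative in the time variable `t` (second coordinate). -/
noncomputable def pt (u : ℝ × ℝ → ℂ) : ℝ × ℝ → ℂ :=
  fun p => deriv (fun t => u (p.1, t)) p.2

/-- The scalar local relation for the Guyer–Krumhansl system: for any root pair
`(ω, ω′)` of the dispersion relation,
`∂ₜ[e^{−ikx+ωt}(−ω′e + ikq)] = ∂ₓ[e^{−ikx+ωt}(−ikβe + (ω′−θk²)q + ikθ∂ₓq)] − ω′e^{−ikx+ωt}f`. -/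
theorem GK_scalar_local_relation
    (τ α μ β θ : ℝ) (hτ : 0 < τ) (hα : 0 < α) (hμ : 0 < μ)
    (hβ : β = α / τ) (hθ : θ = μ^2 / τ)
    (e q f : ℝ × ℝ → ℂ)
    (he : ContDiff ℝ 2 e) (hq : ContDiff ℝ 2 q) (hf : ContDiff ℝ 2 f)
    (hbalance : ∀ p : ℝ × ℝ, pt e p + px q p = f p)
    (hconstitutive : ∀ p : ℝ × ℝ,
      (τ : ℂ) * pt q p + q p - (μ : ℂ)^2 * px (px q) p + (α : ℂ) * px e p = 0)
    (k ω ω' : ℂ)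
    (hsum : ω + ω' = (1 + (μ : ℂ)^2 * k^2) / (τ : ℂ))
    (hprod : ω * ω' = ((α : ℂ) / (τ : ℂ)) * k^2) :
    ∀ p : ℝ × ℝ,
      pt (fun p => Complex.exp (-(I * k * (p.1 : ℂ)) + ω * (p.2 : ℂ)) *
            (-ω' * e p + I * k * q p)) p
      = px (fun p => Complex.exp (-(I * k * (p.1 : ℂ)) + ω * (p.2 : ℂ)) *
            (-(I * k * (β : ℂ)) * e p + (ω' - (θ : ℂ) * k^2) * q p
              + I * k * (θ : ℂ) * px q p)) p
        - ω' * Complex.exp (-(I * k * (p.1 : ℂ)) + ω * (p.2 : ℂ)) * f p := by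
  intro p
  obtain ⟨x, t⟩ := p
  have hτc : (τ : ℂ) ≠ 0 := by exact_mod_cast hτ.ne'
  have hed : Differentiable ℝ e := he.differentiable (by norm_num)
  have hqd : Differentiable ℝ q := hq.differentiable (by norm_num)
  have hpxq_eq : px q = fun p => fderiv ℝ q p ((1 : ℝ), (0 : ℝ)) := by
    funext p
    have h1 : HasDerivAt (fun x : ℝ => (x, p.2)) ((1 : ℝ), (0 : ℝ)) p.1 :=
      (hasDerivAt_id p.1).prodMk (hasDerivAt_const p.1 p.2)
    exact ((hqd (p.1, p.2)).hasFDerivAt.comp_hasDerivAt p.1 h1).deriv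
  have hpxq_diff : Differentiable ℝ (px q) := by
    rw [hpxq_eq]
    exact ((hq.fderiv_right (m := 1) (by norm_num)).clm_apply contDiff_const).differentiable (by norm_num)
  have sliceX : ∀ (u : ℝ × ℝ → ℂ), Differentiable ℝ u → ∀ a b : ℝ,
      HasDerivAt (fun y => u (y, b)) (px u (a, b)) a := by
    intro u hu a b
    have : DifferentiableAt ℝ (fun y => u (y, b)) a :=
      (hu (a, b)).comp a (differentiableAt_id.prodMk (differentiableAt_const b))
    exact this.hasDerivAt
  have sliceT : ∀ (u : ℝ × ℝ → ℂ), Differentiable ℝ u → ∀ a b : ℝ,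
      HasDerivAt (fun s => u (a, s)) (pt u (a, b)) b := by
    intro u hu a b
    have : DifferentiableAt ℝ (fun s => u (a, s)) b :=
      (hu (a, b)).comp b ((differentiableAt_const a).prodMk differentiableAt_id)
    exact this.hasDerivAt
  have h0t : HasDerivAt (fun s : ℝ => (s : ℂ)) 1 t := by
    simpa using (hasDerivAt_id t).ofReal_comp
  have h0x : HasDerivAt (fun y : ℝ => (y : ℂ)) 1 x := by
    simpa using (hasDerivAt_id x).ofReal_comp
  have hex : HasDerivAt (fun s : ℝ => Complex.exp (-(I * k * (x : ℂ)) + ω * (s : ℂ)))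
      (Complex.exp (-(I * k * (x : ℂ)) + ω * (t : ℂ)) * ω) t := by
    have h1 : HasDerivAt (fun s : ℝ => -(I * k * (x : ℂ)) + ω * (s : ℂ)) ω t := by
      simpa using (h0t.const_mul ω).const_add (-(I * k * (x : ℂ)))
    simpa using h1.cexp
  have hexx : HasDerivAt (fun y : ℝ => Complex.exp (-(I * k * (y : ℂ)) + ω * (t : ℂ)))
      (Complex.exp (-(I * k * (x : ℂ)) + ω * (t : ℂ)) * (-(I * k))) x := by
    have h1 : HasDerivAt (fun y : ℝ => -(I * k * (y : ℂ)) + ω * (t : ℂ)) (-(I * k)) x := by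
      simpa using ((h0x.const_mul (I * k)).neg).add_const (ω * (t : ℂ))
    simpa using h1.cexp
  have hAt : HasDerivAt (fun s : ℝ => -ω' * e (x, s) + I * k * q (x, s))
      (-ω' * pt e (x, t) + I * k * pt q (x, t)) t :=
    ((sliceT e hed x t).const_mul (-ω')).add ((sliceT q hqd x t).const_mul (I * k))
  have hGx : HasDerivAt (fun y : ℝ => -(I * k * (β : ℂ)) * e (y, t)
        + (ω' - (θ : ℂ) * k^2) * q (y, t) + I * k * (θ : ℂ) * px q (y, t))
      (-(I * k * (β : ℂ)) * px e (x, t) + (ω' - (θ : ℂ) * k^2) * px q (x, t)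
        + I * k * (θ : ℂ) * px (px q) (x, t)) x :=
    (((sliceX e hed x t).const_mul (-(I * k * (β : ℂ)))).add
      ((sliceX q hqd x t).const_mul (ω' - (θ : ℂ) * k^2))).add
      ((sliceX (px q) hpxq_diff x t).const_mul (I * k * (θ : ℂ)))
  have hLt := hex.fun_mul hAt
  have hRt := hexx.fun_mul hGx
  show deriv (fun s : ℝ => Complex.exp (-(I * k * (x : ℂ)) + ω * (s : ℂ)) *
        (-ω' * e (x, s) + I * k * q (x, s))) t
      = deriv (fun y : ℝ => Complex.exp (-(I * k * (y : ℂ)) + ω * (t : ℂ)) *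
        (-(I * k * (β : ℂ)) * e (y, t) + (ω' - (θ : ℂ) * k^2) * q (y, t)
          + I * k * (θ : ℂ) * px q (y, t))) x
        - ω' * Complex.exp (-(I * k * (x : ℂ)) + ω * (t : ℂ)) * f (x, t)
  rw [hLt.deriv, hRt.deriv]
  have hb := hbalance (x, t)
  have hc := hconstitutive (x, t)
  have hsum'' : (ω + ω') * τ = 1 + (μ : ℂ)^2 * k^2 := by
    rw [hsum, div_mul_cancel₀ _ hτc]
  have hprod'' : (ω * ω') * τ = (α : ℂ) * k^2 := by
    rw [hprod]; field_simp
  have hβ'' : (β : ℂ) * τ = (α : ℂ) := by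
    rw [hβ]; push_cast; field_simp
  have hθ'' : (θ : ℂ) * τ = (μ : ℂ)^2 := by
    rw [hθ]; push_cast; field_simp
  apply mul_left_cancel₀ hτc
  set E : ℂ := Complex.exp (-(I * k * (x : ℂ)) + ω * (t : ℂ)) with hE
  linear_combination (-(τ : ℂ) * ω' * E) * hb + (I * k * E) * hc
    + (I * k * q (x, t) * E) * hsum''
    + ((-(I) * k^3 * q (x, t) - I * k * px (px q) (x, t)) * E) * hθ''
    + ((I * k * px e (x, t) + k^2 * e (x, t)) * E) * hβ''
    + (-(e (x, t)) * E) * hprod''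
    + ((-(τ : ℂ) * e (x, t) * k^2 * (β : ℂ) + (τ : ℂ) * k^2 * (θ : ℂ) * px q (x, t)) * E) * Complex.I_sq
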